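/- arXiv:2002.11999 — 2 statements merged into one kernel-verified Lean document; each statement's English description precedes it below -/
import Mathlib

section
/- For every integer n ≥ 1 and every 1 ≤ k ≤ n, the word i^k is a reduced word for the longest element w_0 of S_{n+1}: the product of the adjacent transpositions along i^k equals the order-reversing permutation w_0, and the length of the word i^k equals n(n+1)/2, the number of inversions of w_0. -/
/-- The adjacent transposition `s_i` swapping `i` and `i+1` (as a permutation of `ℕ`,
with 1-based conventions: the relevant generators are `s_1, …, s_n`). -/
def sw (i : ℕ) : Equiv.Perm ℕ := Equiv.swap i (i + 1)

/-- The product `s_{i_1} ⋯ s_{i_r}` of the adjacent transpositions along a word. -/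
def wordProd (w : List ℕ) : Equiv.Perm ℕ := (w.map sw).prod

/-- The longest element `w_0` of `S_{n+1}`: the order-reversing permutation
`i ↦ n+2−i` of `{1,…,n+1}` (extended by the identity outside). -/
def w0 (n : ℕ) : Equiv.Perm ℕ :=
  Function.Involutive.toPerm (fun i => if 1 ≤ i ∧ i ≤ n + 1 then n + 2 - i else i)
    (by intro i; dsimp only; split_ifs <;> omega)

/-- The number of inversions of a permutation of `{1,…,n+1}`. -/
def inversions (n : ℕ) (w : Equiv.Perm ℕ) : ℕ :=
  ((Finset.Icc 1 (n + 1) ×ˢ Finset.Icc 1 (n + 1)).filter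
    (fun p => p.1 < p.2 ∧ w p.2 < w p.1)).card

/-- Part (A) of the word `i^k`: the word
`(k,k−1,…,1, k+1,k,…,2, …, n,n−1,…,n−k+1)` of the permutation `w_{k,n}`. -/
def wordA (n k : ℕ) : List ℕ :=
  ((List.range (n - k + 1)).map (fun m => (List.range k).map (fun t => k + m - t))).flatten

/-- Part (B) of the word `i^k`: the word
`(n,n−1,…,n−k+2, n,n−1,…,n−k+3, …, n,n−1, n)` of the permutation `S_{n−(k−1)+[k−1]}`. -/
def wordB (n k : ℕ) : List ℕ :=
  ((List.range (k - 1)).map (fun b => (List.range (k - 1 - b)).map (fun t => n - t))).flatten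

/-- Part (C) of the word `i^k`: the word
`(1,2,…,n−k, 1,2,…,n−k−1, …, 1,2, 1)` of the permutation `S_{[n−k]}`. -/
def wordC (n k : ℕ) : List ℕ :=
  ((List.range (n - k)).map (fun b => (List.range (n - k - b)).map (fun t => t + 1))).flatten

/-- The reduced word `i^k` for the longest element `w_0`. -/
def ik (n k : ℕ) : List ℕ := wordA n k ++ wordB n k ++ wordC n k

def dList (len top : ℕ) : List ℕ := (List.range len).map (fun t => top - t)
def aList (len : ℕ) : List ℕ := (List.range len).map (fun t => t + 1)

lemma wordProd_nil : wordProd [] = 1 := by simp [wordProd]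
lemma wordProd_cons (a : ℕ) (l : List ℕ) : wordProd (a :: l) = sw a * wordProd l := by
  simp [wordProd]
lemma wordProd_append (l₁ l₂ : List ℕ) :
    wordProd (l₁ ++ l₂) = wordProd l₁ * wordProd l₂ := by
  simp [wordProd]
lemma wordProd_singleton (a : ℕ) : wordProd [a] = sw a := by simp [wordProd]

lemma sw_apply (i x : ℕ) : sw i x = if x = i then i + 1 else if x = i + 1 then i else x := by
  simp [sw, Equiv.swap_apply_def]

lemma w0_apply (n x : ℕ) : w0 n x = if 1 ≤ x ∧ x ≤ n + 1 then n + 2 - x else x := rfl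

lemma dList_succ (len top : ℕ) : dList (len + 1) top = top :: dList len (top - 1) := by
  simp only [dList, List.range_succ_eq_map, List.map_cons, List.map_map, Nat.sub_zero]
  congr 1
  apply List.map_congr_left
  intro t _
  simp only [Function.comp_apply]
  omega

lemma dList_apply (len : ℕ) : ∀ top, len ≤ top → ∀ x,
    wordProd (dList len top) x =
      if x = top + 1 - len then top + 1
      else if top + 1 - len < x ∧ x ≤ top + 1 then x - 1 else x := by
  induction len with
  | zero =>
    intro top _ x
    simp only [dList, List.range_zero, List.map_nil, wordProd_nil, Equiv.Perm.one_apply]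
    split_ifs <;> omega
  | succ len ih =>
    intro top h x
    rw [dList_succ, wordProd_cons, Equiv.Perm.mul_apply, ih (top - 1) (by omega), sw_apply]
    split_ifs <;> omega

lemma aList_succ (len : ℕ) : aList (len + 1) = aList len ++ [len + 1] := by
  simp [aList, List.range_succ]

lemma aList_apply (len : ℕ) : ∀ x,
    wordProd (aList len) x =
      if x = len + 1 then 1
      else if 1 ≤ x ∧ x ≤ len then x + 1 else x := by
  induction len with
  | zero =>
    intro x
    simp only [aList, List.range_zero, List.map_nil, wordProd_nil, Equiv.Perm.one_apply]
    split_ifs <;> omega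
  | succ len ih =>
    intro x
    rw [aList_succ, wordProd_append, Equiv.Perm.mul_apply, wordProd_singleton, sw_apply, ih]
    split_ifs <;> omega

lemma prodA (k : ℕ) : ∀ r x,
    wordProd (((List.range r).map (fun m => dList k (k + m))).flatten) x =
      if 1 ≤ x ∧ x ≤ r then x + k
      else if r + 1 ≤ x ∧ x ≤ r + k then x - r else x := by
  intro r
  induction r with
  | zero =>
    intro x
    simp only [List.range_zero, List.map_nil, List.flatten_nil, wordProd_nil,
      Equiv.Perm.one_apply]
    split_ifs <;> omega
  | succ r ih =>
    intro x
    rw [List.range_succ, List.map_append, List.flatten_append, wordProd_append,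
      Equiv.Perm.mul_apply]
    simp only [List.map_cons, List.map_nil, List.flatten_cons, List.flatten_nil,
      List.append_nil]
    rw [dList_apply k (k + r) (by omega), ih]
    split_ifs <;> omega

lemma prodB (n c : ℕ) (hc : c ≤ n) : ∀ r, r ≤ c → ∀ x,
    wordProd (((List.range r).map (fun b => dList (c - b) n)).flatten) x =
      if n - c + 1 ≤ x ∧ x ≤ n - c + r then 2 * n + 2 - c - x
      else if n - c + r + 1 ≤ x ∧ x ≤ n + 1 then x - r else x := by
  intro r
  induction r with
  | zero =>
    intro _ x
    simp only [List.range_zero, List.map_nil, List.flatten_nil, wordProd_nil,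
      Equiv.Perm.one_apply]
    split_ifs <;> omega
  | succ r ih =>
    intro h x
    rw [List.range_succ, List.map_append, List.flatten_append, wordProd_append,
      Equiv.Perm.mul_apply]
    simp only [List.map_cons, List.map_nil, List.flatten_cons, List.flatten_nil,
      List.append_nil]
    rw [dList_apply (c - r) n (by omega), ih (by omega)]
    split_ifs <;> omega

lemma prodC (m : ℕ) : ∀ r, r ≤ m → ∀ x,
    wordProd (((List.range r).map (fun b => aList (m - b))).flatten) x =
      if 1 ≤ x ∧ x ≤ m + 1 - r then x + r
      else if m + 2 - r ≤ x ∧ x ≤ m + 1 then m + 2 - x else x := by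
  intro r
  induction r with
  | zero =>
    intro _ x
    simp only [List.range_zero, List.map_nil, List.flatten_nil, wordProd_nil,
      Equiv.Perm.one_apply]
    split_ifs <;> omega
  | succ r ih =>
    intro h x
    rw [List.range_succ, List.map_append, List.flatten_append, wordProd_append,
      Equiv.Perm.mul_apply]
    simp only [List.map_cons, List.map_nil, List.flatten_cons, List.flatten_nil,
      List.append_nil]
    rw [aList_apply (m - r), ih (by omega)]
    split_ifs <;> omega

-- length helpers
lemma sum2 (c : ℕ) : ∀ r, r ≤ c →
    2 * (((List.range r).map (fun b => c - b)).sum) = (2 * c - r + 1) * r := by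
  intro r
  induction r with
  | zero => simp
  | succ r ih =>
    intro h
    rw [List.range_succ, List.map_append, List.sum_append]
    simp only [List.map_cons, List.map_nil, List.sum_cons, List.sum_nil, Nat.add_zero]
    obtain ⟨d, rfl⟩ : ∃ d, c = r + 1 + d := ⟨c - (r + 1), by omega⟩
    have e1 : r + 1 + d - r = d + 1 := by omega
    have e2 : 2 * (r + 1 + d) - (r + 1) + 1 = r + 2 * d + 2 := by omega
    have e3 : 2 * (r + 1 + d) - r + 1 = r + 2 * d + 3 := by omega
    have ih' := ih (by omega)
    rw [e3] at ih'
    rw [e1, e2, Nat.mul_add, ih']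
    ring

lemma sum2f (c : ℕ) : ∀ r, r ≤ c →
    2 * (∑ b ∈ Finset.range r, (c - b)) = (2 * c - r + 1) * r := by
  intro r
  induction r with
  | zero => simp
  | succ r ih =>
    intro h
    rw [Finset.sum_range_succ]
    obtain ⟨d, rfl⟩ : ∃ d, c = r + 1 + d := ⟨c - (r + 1), by omega⟩
    have e1 : r + 1 + d - r = d + 1 := by omega
    have e2 : 2 * (r + 1 + d) - (r + 1) + 1 = r + 2 * d + 2 := by omega
    have e3 : 2 * (r + 1 + d) - r + 1 = r + 2 * d + 3 := by omega
    have ih' := ih (by omega)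
    rw [e3] at ih'
    rw [e1, e2, Nat.mul_add, ih']
    ring

/-- `i^k` is a reduced word for the longest element `w_0` of `S_{n+1}`: the product of the
adjacent transpositions along `i^k` is `w_0`, and the length of `i^k` is `n(n+1)/2`, the
number of inversions of `w_0`. -/
theorem ik_reduced_word_for_w0 (n k : ℕ) (hn : 1 ≤ n) (hk1 : 1 ≤ k) (hkn : k ≤ n) :
    wordProd (ik n k) = w0 n ∧
    (ik n k).length = n * (n + 1) / 2 ∧
    inversions n (w0 n) = n * (n + 1) / 2 := by
  have hAeq : wordA n k = ((List.range (n - k + 1)).map (fun m => dList k (k + m))).flatten :=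
    rfl
  have hBeq : wordB n k = ((List.range (k - 1)).map (fun b => dList (k - 1 - b) n)).flatten :=
    rfl
  have hCeq : wordC n k = ((List.range (n - k)).map (fun b => aList (n - k - b))).flatten :=
    rfl
  refine ⟨?_, ?_, ?_⟩
  · -- product equals w0
    apply Equiv.ext
    intro x
    show wordProd (wordA n k ++ wordB n k ++ wordC n k) x = w0 n x
    rw [wordProd_append, wordProd_append, Equiv.Perm.mul_apply, Equiv.Perm.mul_apply,
      hAeq, hBeq, hCeq, prodC (n - k) (n - k) le_rfl, prodB n (k - 1) (by omega) (k - 1) le_rfl,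
      prodA k (n - k + 1), w0_apply]
    split_ifs <;> omega
  · -- length
    have lenA : (wordA n k).length = (n - k + 1) * k := by
      rw [hAeq, List.length_flatten, List.map_map]
      have : (List.length ∘ fun m => dList k (k + m)) = fun _ => k := by
        funext m; simp [dList]
      rw [this]
      try simp [List.map_const', List.sum_replicate, Nat.mul_comm]
    have lenB : 2 * (wordB n k).length = k * (k - 1) := by
      rw [hBeq, List.length_flatten, List.map_map]
      have : (List.length ∘ fun b => dList (k - 1 - b) n) = fun b => k - 1 - b := by
        funext b; simp [dList]
      rw [this, sum2 (k - 1) (k - 1) le_rfl]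
      have : 2 * (k - 1) - (k - 1) + 1 = k := by omega
      rw [this, Nat.mul_comm]
    have lenC : 2 * (wordC n k).length = (n - k + 1) * (n - k) := by
      rw [hCeq, List.length_flatten, List.map_map]
      have : (List.length ∘ fun b => aList (n - k - b)) = fun b => n - k - b := by
        funext b; simp [aList]
      rw [this, sum2 (n - k) (n - k) le_rfl]
      have : 2 * (n - k) - (n - k) + 1 = n - k + 1 := by omega
      rw [this]
    have hlen : (ik n k).length = (wordA n k).length + (wordB n k).length + (wordC n k).length := by
      simp [ik]
      omega
    have h2 : 2 * (ik n k).length = n * (n + 1) := by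
      rw [hlen, Nat.mul_add, Nat.mul_add, lenB, lenC, lenA]
      obtain ⟨a, rfl⟩ : ∃ a, n = k + a := ⟨n - k, by omega⟩
      obtain ⟨b, rfl⟩ : ∃ b, k = b + 1 := ⟨k - 1, by omega⟩
      have e1 : b + 1 + a - (b + 1) = a := by omega
      have e2 : b + 1 - 1 = b := by omega
      rw [e1, e2]
      ring
    generalize hM : n * (n + 1) = M at h2 ⊢
    omega
  · -- inversions
    have key : inversions n (w0 n) = ∑ a ∈ Finset.Icc 1 (n + 1), (n + 1 - a) := by
      unfold inversions
      rw [Finset.card_eq_sum_card_fiberwise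
        (f := Prod.fst) (t := Finset.Icc 1 (n + 1))
        (fun p hp => by
          simp only [Finset.mem_coe, Finset.mem_filter, Finset.mem_product] at hp
          exact hp.1.1)]
      apply Finset.sum_congr rfl
      intro a ha
      rw [Finset.mem_Icc] at ha
      have hfib : ((Finset.Icc 1 (n + 1) ×ˢ Finset.Icc 1 (n + 1)).filter
            (fun p => p.1 < p.2 ∧ w0 n p.2 < w0 n p.1)).filter (fun p => p.1 = a)
          = {a} ×ˢ Finset.Icc (a + 1) (n + 1) := by
        ext ⟨x, y⟩
        rw [Finset.mem_filter, Finset.mem_filter]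
        simp only [Finset.mem_filter, Finset.mem_product, Finset.mem_Icc,
          Finset.mem_singleton, w0_apply]
        split_ifs <;> omega
      rw [hfib, Finset.card_product, Finset.card_singleton, Nat.card_Icc]
      omega
    rw [key]
    have hconv : ∑ a ∈ Finset.Icc 1 (n + 1), (n + 1 - a) = ∑ i ∈ Finset.range (n + 1), (n - i) := by
      apply Finset.sum_nbij' (i := fun a => a - 1) (j := fun b => b + 1) <;>
        (intros; simp_all only [Finset.mem_Icc, Finset.mem_range]) <;> omega
    rw [hconv, Finset.sum_range_succ]
    have h2 := sum2f n n le_rfl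
    have e : 2 * n - n + 1 = n + 1 := by omega
    rw [e] at h2
    have h3 : 2 * ((∑ i ∈ Finset.range n, (n - i)) + (n - n)) = n * (n + 1) := by
      simp only [Nat.sub_self, Nat.add_zero]
      rw [h2]
      ring
    generalize hM : n * (n + 1) = M at h3 ⊢
    omega
end

section
/- For every integer n ≥ 1 and every 1 ≤ k ≤ n, the initial segment of the enumeration of positive roots associated to the reduced word i^k is given explicitly by: (β_1^{i^k}, β_2^{i^k}, …, β_{k(n−k+1)}^{i^k}) = (α_{k,k}, α_{k−1,k}, …, α_{1,k}, α_{k,k+1}, α_{k−1,k+1}, …, α_{1,k+1}, …, α_{k,n}, α_{k−1,n}, …, α_{1,n}); equivalently, for all k ≤ j ≤ n and 1 ≤ i ≤ k, β_ℓ^{i^k} = (i,j) where ℓ = (j−k)·k + (k − i + 1). -/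
/-- The positive root `β_ℓ^i = s_{i_1}⋯s_{i_{ℓ−1}}(α_{i_ℓ})` (1-based `ℓ`) associated to a
reduced word `w = (i_1,…,i_N)`, encoded as the pair
`(σ(i_ℓ), σ(i_ℓ+1) − 1)` where `σ = s_{i_1}⋯s_{i_{ℓ−1}}`. -/
def beta (w : List ℕ) (l : ℕ) : ℕ × ℕ :=
  (wordProd (w.take (l - 1)) (w.getD (l - 1) 0),
   wordProd (w.take (l - 1)) (w.getD (l - 1) 0 + 1) - 1)

/-- Product of a descending run `a, a-1, …, a-r+1`. -/
lemma descRun (a : ℕ) : ∀ r, r ≤ a → ∀ x,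
    wordProd ((List.range r).map (fun t => a - t)) x =
      if x = a - r + 1 then a + 1 else if a - r + 2 ≤ x ∧ x ≤ a + 1 then x - 1 else x := by
  intro r
  induction r with
  | zero =>
    intro _ x
    have h : wordProd ((List.range 0).map (fun t => a - t)) x = x := by
      simp [wordProd]
    rw [h]
    split_ifs <;> omega
  | succ r ih =>
    intro hr x
    rw [List.range_succ, List.map_append, wordProd_append, Equiv.Perm.mul_apply]
    have hsw : wordProd (List.map (fun t => a - t) [r]) x
        = Equiv.swap (a - r) (a - r + 1) x := by
      simp [wordProd, sw]
    rw [hsw, ih (by omega), Equiv.swap_apply_def]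
    split_ifs <;> omega

/-- Product of the first `M` full blocks of `wordA`. -/
lemma blocksProd (k : ℕ) (hk : 1 ≤ k) : ∀ M x,
    wordProd (((List.range M).map
        (fun m => (List.range k).map (fun t => k + m - t))).flatten) x =
      if 1 ≤ x ∧ x ≤ M then k + x else if M + 1 ≤ x ∧ x ≤ M + k then x - M else x := by
  intro M
  induction M with
  | zero =>
    intro x
    have h : wordProd (((List.range 0).map
        (fun m => (List.range k).map (fun t => k + m - t))).flatten) x = x := by
      simp [wordProd]
    rw [h]
    split_ifs <;> omega
  | succ M ih =>
    intro x
    rw [List.range_succ, List.map_append, List.flatten_append, wordProd_append,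
      Equiv.Perm.mul_apply]
    simp only [List.map_cons, List.map_nil, List.flatten_cons, List.flatten_nil,
      List.append_nil]
    rw [descRun (k + M) k (by omega), ih]
    split_ifs <;> omega

/-- Taking `M·k + t` letters (with `t ≤ k`) from a flatten of `k`-blocks. -/
lemma take_flatten (k : ℕ) : ∀ (M : ℕ) (blk : ℕ → List ℕ), (∀ m, (blk m).length = k) →
    ∀ R t, M < R → t ≤ k →
    (((List.range R).map blk).flatten).take (M * k + t)
      = ((List.range M).map blk).flatten ++ (blk M).take t := by
  intro M
  induction M with
  | zero =>
    intro blk hlen R t hR ht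
    obtain ⟨r, rfl⟩ : ∃ r, R = r + 1 := ⟨R - 1, by omega⟩
    rw [List.range_succ_eq_map, List.map_cons, List.flatten_cons,
      List.take_append, hlen]
    have h0 : 0 * k + t = t := by omega
    rw [h0, Nat.sub_eq_zero_of_le ht, List.take_zero, List.append_nil]
    simp
  | succ M ih =>
    intro blk hlen R t hR ht
    obtain ⟨r, rfl⟩ : ∃ r, R = r + 1 := ⟨R - 1, by omega⟩
    rw [List.range_succ_eq_map, List.map_cons, List.flatten_cons, List.map_map,
      List.take_append, hlen]
    have h1 : (M + 1) * k + t - k = M * k + t := by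
      have : (M + 1) * k = M * k + k := by ring
      omega
    have h2 : (blk 0).length ≤ (M + 1) * k + t := by
      rw [hlen]
      have : (M + 1) * k = M * k + k := by ring
      omega
    rw [h1, List.take_of_length_le h2,
      ih (blk ∘ Nat.succ) (fun m => hlen _) r t (by omega) ht]
    rw [List.range_succ_eq_map, List.map_cons, List.flatten_cons, List.map_map,
      List.append_assoc]
    rfl

/-- The letter at position `M·k + t` (with `t < k`) in a flatten of `k`-blocks. -/
lemma getD_flatten (k : ℕ) (blk : ℕ → List ℕ) (hlen : ∀ m, (blk m).length = k)
    (R M t : ℕ) (hR : M < R) (ht : t < k) :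
    (((List.range R).map blk).flatten).getD (M * k + t) 0 = (blk M).getD t 0 := by
  set L := ((List.range R).map blk).flatten with hL
  have h1 : L.take (M * k + t + 1)
      = ((List.range M).map blk).flatten ++ (blk M).take (t + 1) :=
    take_flatten k M blk hlen R (t + 1) hR (by omega)
  have h2 : L.take (M * k + t)
      = ((List.range M).map blk).flatten ++ (blk M).take t :=
    take_flatten k M blk hlen R t hR (by omega)
  have h3 : L.take (M * k + t + 1) = L.take (M * k + t) ++ L[M * k + t]?.toList :=
    List.take_succ
  have h4 : (blk M).take (t + 1) = (blk M).take t ++ (blk M)[t]?.toList :=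
    List.take_succ
  rw [h1, h2, h4, ← List.append_assoc] at h3
  have h5 : (blk M)[t]?.toList = L[M * k + t]?.toList :=
    List.append_cancel_left h3
  have h6 : L[M * k + t]? = (blk M)[t]? := by
    cases ha : L[M * k + t]? <;> cases hb : (blk M)[t]? <;>
      rw [ha, hb] at h5 <;> simp at h5 ⊢ <;> exact h5.symm
  rw [List.getD_eq_getElem?_getD, h6, ← List.getD_eq_getElem?_getD]

/-- The initial segment of the enumeration of positive roots associated to `i^k` is
`(α_{k,k}, α_{k−1,k}, …, α_{1,k}, α_{k,k+1}, …, α_{1,k+1}, …, α_{k,n}, …, α_{1,n})`: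
for all `k ≤ j ≤ n` and `1 ≤ i ≤ k`, the root at position `ℓ = (j−k)·k + (k−i+1)`
is `α_{i,j}`. -/
theorem ik_initial_segment_explicit (n k : ℕ) (hn : 1 ≤ n) (hk1 : 1 ≤ k) (hkn : k ≤ n) :
    ∀ i j : ℕ, 1 ≤ i → i ≤ k → k ≤ j → j ≤ n →
      beta (ik n k) ((j - k) * k + (k - i + 1)) = (i, j) := by
  intro i j hi1 hik hkj hjn
  set blk : ℕ → List ℕ := fun m => (List.range k).map (fun t => k + m - t) with hblk
  have hlen : ∀ m, (blk m).length = k := fun m => by rw [hblk]; simp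
  set M := j - k with hM
  set t := k - i with ht
  have e : M * k + (t + 1) - 1 = M * k + t := by
    rw [← Nat.add_assoc]
    exact Nat.succ_sub_one _
  have hlenA : (wordA n k).length = (n - k + 1) * k := by
    rw [wordA, List.length_flatten, List.map_map]
    have h : (List.length ∘ fun m => (List.range k).map (fun t => k + m - t))
        = fun _ : ℕ => k := by
      funext m; simp
    rw [h, List.map_const', List.sum_replicate, smul_eq_mul, List.length_range]
  have hpk : M * k + t < (n - k + 1) * k := by
    calc M * k + t < M * k + k := by omega
      _ = (M + 1) * k := by ring
      _ ≤ (n - k + 1) * k := Nat.mul_le_mul_right _ (by omega)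
  have hple : M * k + t ≤ (wordA n k).length := by rw [hlenA]; exact le_of_lt hpk
  have hplt : M * k + t < (wordA n k).length := by rw [hlenA]; exact hpk
  have htake : (ik n k).take (M * k + t) = (wordA n k).take (M * k + t) := by
    rw [ik, List.append_assoc, List.take_append,
      Nat.sub_eq_zero_of_le hple, List.take_zero, List.append_nil]
  have hget : (ik n k).getD (M * k + t) 0 = (wordA n k).getD (M * k + t) 0 := by
    rw [ik, List.append_assoc]
    exact List.getD_append _ _ _ _ hplt
  have hwA : wordA n k = ((List.range (n - k + 1)).map blk).flatten := by rw [hblk]; rfl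
  have hletter : (blk M).getD t 0 = k + M - t := by
    rw [hblk]
    simp [List.getD_eq_getElem?_getD, List.getElem?_range, (show t < k by omega)]
  have hblkt : (blk M).take t = (List.range t).map (fun s => k + M - s) := by
    rw [hblk]
    rw [← List.map_take, List.take_range, min_eq_left (show t ≤ k by omega)]
  unfold beta
  rw [e, htake, hget, hwA,
    take_flatten k M blk hlen (n - k + 1) t (by omega) (by omega),
    getD_flatten k blk hlen (n - k + 1) M t (by omega) (by omega),
    hletter, hblkt, wordProd_append, hblk, Prod.mk.injEq]
  constructor
  · rw [Equiv.Perm.mul_apply, descRun (k + M) t (by omega), blocksProd k hk1 M]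
    split_ifs <;> omega
  · rw [Equiv.Perm.mul_apply, descRun (k + M) t (by omega), blocksProd k hk1 M]
    split_ifs <;> omega
end
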